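/- In the group H, the relation σ_1 τ_k = τ_k σ_1 holds for every k ≥ 3 (where σ_1 is a generator and τ_k is the inductively defined abbreviation). -/

import Mathlib

/-- Relator corresponding to the equation `u = v`. -/
def grel {α : Type*} (u v : FreeGroup α) : FreeGroup α := u * v⁻¹

/-- The four generators of the finite presentation `H` of `BV`. -/
inductive HGen : Type
  | x0 | x1 | s1 | t1

/-- The abbreviations `x_i` in the free group on the four generators:
`x_{i+2} = x_i⁻¹ x_{i+1} x_i`. -/
def xH : ℕ → FreeGroup HGen
  | 0 => FreeGroup.of HGen.x0
  | 1 => FreeGroup.of HGen.x1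
  | (i + 2) => (xH i)⁻¹ * xH (i + 1) * xH i

/-- The abbreviations `σ_i` (meaningful for `i ≥ 1`):
`σ_{i+1} = x_{i-1}⁻¹ σ_i x_i σ_i⁻¹`. -/
def sH : ℕ → FreeGroup HGen
  | 0 => 1
  | 1 => FreeGroup.of HGen.s1
  | (i + 2) => (xH i)⁻¹ * sH (i + 1) * xH (i + 1) * (sH (i + 1))⁻¹

/-- The abbreviations `τ_i` (meaningful for `i ≥ 1`):
`τ_{i+1} = x_{i-1}⁻¹ τ_i σ_i⁻¹`. -/
def tH : ℕ → FreeGroup HGen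
  | 0 => 1
  | 1 => FreeGroup.of HGen.t1
  | (i + 2) => (xH i)⁻¹ * tH (i + 1) * (sH (i + 1))⁻¹

/-- The 18 defining relators of `H`. -/
def hRels : Set (FreeGroup HGen) :=
  { grel (xH 2 * xH 0) (xH 0 * xH 3),
    grel (xH 3 * xH 1) (xH 1 * xH 4),
    grel (sH 1 * xH 2) (xH 2 * sH 1),
    grel (sH 1 * xH 3) (xH 3 * sH 1),
    grel (sH 2 * xH 3) (xH 3 * sH 2),
    grel (sH 2 * xH 4) (xH 4 * sH 2),
    grel (sH 2 * xH 0) (xH 0 * sH 3),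
    grel (sH 3 * xH 1) (xH 1 * sH 4),
    grel (sH 1 * xH 0) (xH 1 * sH 1 * sH 2),
    grel (sH 2 * xH 1) (xH 2 * sH 2 * sH 3),
    grel (tH 2 * xH 0) (xH 0 * tH 3),
    grel (tH 3 * xH 1) (xH 1 * tH 4),
    grel (tH 1 * xH 0) (sH 1 * tH 2),
    grel (tH 2 * xH 1) (sH 2 * tH 3),
    grel (sH 1 * sH 3) (sH 3 * sH 1),
    grel (sH 1 * sH 2 * sH 1) (sH 2 * sH 1 * sH 2),
    grel (sH 1 * tH 3) (tH 3 * sH 1),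
    grel (sH 1 * tH 2 * sH 1) (tH 2 * sH 1 * tH 2) }

/-- The finitely presented group `H` (4 generators, 18 relators). -/
abbrev HGrp : Type := PresentedGroup hRels


namespace HAux

/-- Shorthand for the quotient map. -/
abbrev p : FreeGroup HGen →* HGrp := PresentedGroup.mk hRels

lemma rel_eq {u v : FreeGroup HGen} (h : grel u v ∈ hRels) : p u = p v := by
  have h1 : p (grel u v) = 1 :=
    (QuotientGroup.eq_one_iff _).mpr (Subgroup.subset_normalClosure h)
  rw [grel, map_mul, map_inv] at h1
  exact mul_inv_eq_one.mp h1

lemma comm_x : ∀ i, Commute (p (sH 1)) (p (xH (i + 2))) ∧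
    Commute (p (sH 1)) (p (xH (i + 3)))
  | 0 => by
    constructor
    · have := rel_eq (u := sH 1 * xH 2) (v := xH 2 * sH 1) (by simp [hRels])
      simp only [map_mul] at this
      exact this
    · have := rel_eq (u := sH 1 * xH 3) (v := xH 3 * sH 1) (by simp [hRels])
      simp only [map_mul] at this
      exact this
  | (i + 1) => by
    refine ⟨(comm_x i).2, ?_⟩
    have h1 := (comm_x i).1
    have h2 := (comm_x i).2
    have e : xH (i + 4) = (xH (i + 2))⁻¹ * xH (i + 3) * xH (i + 2) := rfl
    rw [show i + 1 + 3 = i + 4 from rfl, e]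
    simp only [map_mul, map_inv]
    exact (h1.inv_right.mul_right h2).mul_right h1

lemma comm_s : ∀ j, Commute (p (sH 1)) (p (sH (j + 3)))
  | 0 => by
    have := rel_eq (u := sH 1 * sH 3) (v := sH 3 * sH 1) (by simp [hRels])
    simp only [map_mul] at this
    exact this
  | (j + 1) => by
    have hs := comm_s j
    have hx1 := (comm_x j).1
    have hx2 := (comm_x j).2
    have e : sH (j + 4) = (xH (j + 2))⁻¹ * sH (j + 3) * xH (j + 3) * (sH (j + 3))⁻¹ := rfl
    rw [show j + 1 + 3 = j + 4 from rfl, e]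
    simp only [map_mul, map_inv]
    exact ((hx1.inv_right.mul_right hs).mul_right hx2).mul_right hs.inv_right

lemma comm_t : ∀ k, Commute (p (sH 1)) (p (tH (k + 3)))
  | 0 => by
    have := rel_eq (u := sH 1 * tH 3) (v := tH 3 * sH 1) (by simp [hRels])
    simp only [map_mul] at this
    exact this
  | (k + 1) => by
    have ht := comm_t k
    have hx := (comm_x k).1
    have hs := comm_s k
    have e : tH (k + 4) = (xH (k + 2))⁻¹ * tH (k + 3) * (sH (k + 3))⁻¹ := rfl
    rw [show k + 1 + 3 = k + 4 from rfl, e]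
    simp only [map_mul, map_inv]
    exact (hx.inv_right.mul_right ht).mul_right hs.inv_right

end HAux

/-- In `H`, the relation `σ₁ τ_k = τ_k σ₁` holds for every `k ≥ 3`. -/
theorem h_sigma1_tau_comm (k : ℕ) (hk : 3 ≤ k) :
    PresentedGroup.mk hRels (sH 1 * tH k) = PresentedGroup.mk hRels (tH k * sH 1) := by
  obtain ⟨m, rfl⟩ : ∃ m, k = m + 3 := ⟨k - 3, by omega⟩
  simpa only [map_mul] using (HAux.comm_t m).eq
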